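/- arXiv:1310.4206 — 5 statements merged into one kernel-verified Lean document; each statement's English description precedes it below -/
import Mathlib

section
/- Let X be a real 2n×2n symplectic matrix (i.e. XᵀJX = J, where J = [[0, I],[−I, 0]] is the standard symplectic matrix) and let W = (1/2)(X + X⁻¹). Then all complex eigenvalues of X lie on the unit circle if and only if all eigenvalues of W are real and lie in the interval [−1, 1]. -/
open Matrix

/-- The standard symplectic matrix `J = [[0, I], [-I, 0]]` in `n × n` blocks. -/
noncomputable def stdSymplecticJ (n : ℕ) : Matrix (Fin n ⊕ Fin n) (Fin n ⊕ Fin n) ℝ :=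
  Matrix.fromBlocks 0 1 (-1) 0

section aux
open Polynomial




variable {m : Type*} [Fintype m] [DecidableEq m]

lemma my_eval_charpoly {R : Type*} [CommRing R] (M : Matrix m m R) (μ : R) :
    M.charpoly.eval μ = (μ • (1 : Matrix m m R) - M).det := by
  rw [Matrix.charpoly]
  have h := RingHom.map_det (Polynomial.evalRingHom μ) (charmatrix M)
  rw [Polynomial.coe_evalRingHom] at h
  rw [h]
  rw [RingHom.mapMatrix_apply]
  congr 1
  ext i j
  by_cases hij : i = j
  · subst hij; simp [charmatrix_apply, Matrix.one_apply]
  · simp [charmatrix_apply_ne _ _ _ hij, Matrix.one_apply, hij]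

lemma key_iff (Y : Matrix m m ℂ) (hY : IsUnit Y.det) (lam : ℂ) (hlam : lam ≠ 0) :
    (((1:ℂ)/2) • (Y + Y⁻¹)).charpoly.IsRoot ((lam + lam⁻¹)/2) ↔
      (Y.charpoly.IsRoot lam ∨ Y.charpoly.IsRoot lam⁻¹) := by
  have h2 : Y⁻¹ * Y = 1 := nonsing_inv_mul Y hY
  have hll : lam * lam⁻¹ = 1 := mul_inv_cancel₀ hlam
  have step1 : (lam • (1 : Matrix m m ℂ) - Y) * (lam⁻¹ • (1 : Matrix m m ℂ) - Y)
      = (1 : Matrix m m ℂ) - (lam + lam⁻¹) • Y + Y * Y := by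
    simp only [sub_mul, mul_sub, smul_mul_assoc, mul_smul_comm, smul_smul, hll, one_mul,
      mul_one, one_smul]
    match_scalars <;> (field_simp; try ring)
  have step2 : Y⁻¹ * ((lam • (1 : Matrix m m ℂ) - Y) * (lam⁻¹ • (1 : Matrix m m ℂ) - Y))
      = Y⁻¹ - (lam + lam⁻¹) • (1 : Matrix m m ℂ) + Y := by
    rw [step1, mul_add, mul_sub, mul_one, mul_smul_comm, h2, ← mul_assoc, h2, one_mul]
  have key_eq : ((lam + lam⁻¹)/2) • (1 : Matrix m m ℂ) - ((1:ℂ)/2) • (Y + Y⁻¹)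
      = (-(1/2) : ℂ) • (Y⁻¹ * ((lam • (1 : Matrix m m ℂ) - Y) * (lam⁻¹ • (1 : Matrix m m ℂ) - Y))) := by
    rw [step2]
    module
  have hdetinv : Y⁻¹.det ≠ 0 := by
    rw [Matrix.det_nonsing_inv, Ring.inverse_eq_inv]
    exact inv_ne_zero hY.ne_zero
  have hpow : (-(1/2) : ℂ)^(Fintype.card m) ≠ 0 := pow_ne_zero _ (by norm_num)
  have main : (((1:ℂ)/2) • (Y + Y⁻¹)).charpoly.eval ((lam + lam⁻¹)/2)
      = (-(1/2) : ℂ)^(Fintype.card m) * (Y⁻¹.det * (Y.charpoly.eval lam * Y.charpoly.eval lam⁻¹)) := by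
    rw [my_eval_charpoly, key_eq, det_smul, det_mul, det_mul, ← my_eval_charpoly, ← my_eval_charpoly]
  simp only [Polynomial.IsRoot, main, mul_eq_zero, hpow, hdetinv, false_or]

lemma zero_not_root (Y : Matrix m m ℂ) (hY : IsUnit Y.det) : ¬ Y.charpoly.IsRoot 0 := by
  simp only [Polynomial.IsRoot, my_eval_charpoly, zero_smul, zero_sub, det_neg]
  intro h
  rcases mul_eq_zero.mp h with h | h
  · exact pow_ne_zero _ (by norm_num : (-1:ℂ) ≠ 0) h
  · exact hY.ne_zero h

lemma aux_iff (Y : Matrix m m ℂ) (hY : IsUnit Y.det) :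
    (∀ μ : ℂ, Y.charpoly.IsRoot μ → ‖μ‖ = 1) ↔
      (∀ μ : ℂ, (((1:ℂ)/2) • (Y + Y⁻¹)).charpoly.IsRoot μ →
        μ.im = 0 ∧ -1 ≤ μ.re ∧ μ.re ≤ 1) := by
  constructor
  · intro h μ hμ
    obtain ⟨s, hs⟩ := IsAlgClosed.exists_pow_nat_eq (μ^2 - 1) (n := 2) (by norm_num)
    set lam := μ + s with hlamdef
    have hprod : lam * (μ - s) = 1 := by
      have : lam * (μ - s) = μ^2 - s^2 := by ring
      rw [this, hs]; ring
    have hlam : lam ≠ 0 := left_ne_zero_of_mul (hprod ▸ one_ne_zero)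
    have hinv : lam⁻¹ = μ - s := eq_inv_of_mul_eq_one_left (by rw [mul_comm]; exact hprod) |>.symm
    have hμeq : μ = (lam + lam⁻¹)/2 := by rw [hinv, hlamdef]; ring
    have hroot : Y.charpoly.IsRoot lam ∨ Y.charpoly.IsRoot lam⁻¹ := by
      rw [← key_iff Y hY lam hlam, ← hμeq]; exact hμ
    have habs : ‖lam‖ = 1 := by
      rcases hroot with hr | hr
      · exact h _ hr
      · have := h _ hr
        rw [norm_inv] at this
        exact inv_injective (by rw [this, inv_one])
    have hconj : lam⁻¹ = (starRingEnd ℂ) lam := by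
      rw [Complex.inv_def, Complex.normSq_eq_norm_sq, habs]
      simp
    have : μ = (lam.re : ℂ) := by
      rw [hμeq, hconj, Complex.add_conj]
      push_cast; ring
    rw [this]
    refine ⟨by simp, ?_, ?_⟩
    · simp only [Complex.ofReal_re]
      have := Complex.abs_re_le_norm lam
      rw [habs] at this
      exact neg_le_of_abs_le this
    · simp only [Complex.ofReal_re]
      have := Complex.abs_re_le_norm lam
      rw [habs] at this
      exact le_of_abs_le this
  · intro h lam hlam0
    have hlam : lam ≠ 0 := by rintro rfl; exact zero_not_root Y hY hlam0
    have hroot := (key_iff Y hY lam hlam).mpr (Or.inl hlam0)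
    obtain ⟨him, hre1, hre2⟩ := h _ hroot
    set μ := (lam + lam⁻¹)/2 with hμdef
    have hμre : μ = (μ.re : ℂ) := Complex.ext rfl (by simp [him])
    have hquad : lam^2 - 2*μ*lam + 1 = 0 := by
      have : lam * ((lam + lam⁻¹)/2) * 2 = lam^2 + lam * lam⁻¹ := by ring
      rw [mul_inv_cancel₀ hlam] at this
      rw [← hμdef] at this
      linear_combination -this
    have hμc : (starRingEnd ℂ) μ = μ := by rw [hμre]; exact Complex.conj_ofReal _
    have hquadc : ((starRingEnd ℂ) lam)^2 - 2*μ*((starRingEnd ℂ) lam) + 1 = 0 := by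
      have h1 := congrArg (starRingEnd ℂ) hquad
      simp only [map_sub, map_add, map_pow, _root_.map_mul, _root_.map_one, map_zero,
        map_ofNat, hμc] at h1
      exact h1
    have hfact : ((starRingEnd ℂ) lam - lam) * ((starRingEnd ℂ) lam - lam⁻¹) = 0 := by
      have hsum : lam + lam⁻¹ = 2*μ := by rw [hμdef]; ring
      have hprod : lam * lam⁻¹ = 1 := mul_inv_cancel₀ hlam
      calc ((starRingEnd ℂ) lam - lam) * ((starRingEnd ℂ) lam - lam⁻¹)
          = ((starRingEnd ℂ) lam)^2 - (lam + lam⁻¹) * ((starRingEnd ℂ) lam) + lam * lam⁻¹ := by ring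
        _ = ((starRingEnd ℂ) lam)^2 - 2*μ*((starRingEnd ℂ) lam) + 1 := by rw [hsum, hprod]
        _ = 0 := hquadc
    rcases mul_eq_zero.mp hfact with hcase | hcase
    · -- lam is real
      have himz : lam.im = 0 := by
        have h1 := sub_eq_zero.mp hcase
        rw [Complex.conj_eq_iff_im] at h1
        exact h1
      have hlamr : lam = (lam.re : ℂ) := Complex.ext rfl (by simp [himz])
      set r := lam.re with hr
      set c := μ.re with hc
      have hreal : r^2 - 2*c*r + 1 = 0 := by
        have h1 := hquad
        rw [hlamr, hμre] at h1
        have h2 : ((r^2 - 2*c*r + 1 : ℝ) : ℂ) = 0 := by push_cast; linear_combination h1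
        exact_mod_cast h2
      have hkey : (r^2-1)^2 = 4*(r^2)*(c^2-1) := by
        linear_combination (r^2 + 1 + 2*c*r) * hreal
      have hle : (r^2-1)^2 ≤ 0 := by
        nlinarith [mul_nonneg (sq_nonneg r) (mul_nonneg (by linarith : (0:ℝ) ≤ 1 - c) (by linarith : (0:ℝ) ≤ 1 + c))]
      have hsq : r^2 = 1 := by
        have h0 : (r^2-1)^2 = 0 := le_antisymm hle (sq_nonneg _)
        have := sq_eq_zero_iff.mp h0
        linarith
      rw [hlamr, Complex.norm_real, Real.norm_eq_abs]
      have habs2 : |r|^2 = 1 := by rw [sq_abs]; exact hsq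
      nlinarith [abs_nonneg r]
    · -- conj lam = lam⁻¹
      have h1 : lam * (starRingEnd ℂ) lam = 1 := by
        rw [sub_eq_zero.mp hcase, mul_inv_cancel₀ hlam]
      rw [Complex.mul_conj] at h1
      have hns : Complex.normSq lam = 1 := by exact_mod_cast h1
      rw [Complex.norm_def, hns, Real.sqrt_one]

end aux

/-- Roberts' lemma: for a real symplectic matrix `X`, all complex eigenvalues of `X`
lie on the unit circle iff all eigenvalues of `W = (X + X⁻¹)/2` are real and in `[-1, 1]`. -/
theorem eigenvalues_on_unit_circle_iff_of_symplectic (n : ℕ)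
    (X : Matrix (Fin n ⊕ Fin n) (Fin n ⊕ Fin n) ℝ)
    (hX : Xᵀ * stdSymplecticJ n * X = stdSymplecticJ n) :
    (∀ μ : ℂ, ((X.map (algebraMap ℝ ℂ)).charpoly).IsRoot μ → ‖μ‖ = 1) ↔
      (∀ μ : ℂ, ((((1 : ℝ) / 2) • (X + X⁻¹)).map (algebraMap ℝ ℂ)).charpoly.IsRoot μ →
        μ.im = 0 ∧ -1 ≤ μ.re ∧ μ.re ≤ 1) := by
  have hJ : stdSymplecticJ n * (stdSymplecticJ n)ᵀ = 1 := by
    simp [stdSymplecticJ, Matrix.fromBlocks_transpose, Matrix.fromBlocks_multiply,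
      ← Matrix.fromBlocks_one]
  have hJdet : (stdSymplecticJ n).det ≠ 0 := by
    intro h0
    have := congrArg Matrix.det hJ
    rw [Matrix.det_mul, Matrix.det_transpose, Matrix.det_one, h0] at this
    simp at this
  have hXdet : IsUnit X.det := by
    have := congrArg Matrix.det hX
    rw [Matrix.det_mul, Matrix.det_mul, Matrix.det_transpose] at this
    have h1 : (X.det * X.det) * (stdSymplecticJ n).det = 1 * (stdSymplecticJ n).det := by
      rw [one_mul]; linear_combination this
    have h2 : X.det * X.det = 1 := mul_right_cancel₀ hJdet h1
    exact IsUnit.of_mul_eq_one _ h2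
  set f := algebraMap ℝ ℂ with hf
  set Y := X.map f with hY
  have hYdet : IsUnit Y.det := by
    rw [isUnit_iff_ne_zero, hY]
    have hd := RingHom.map_det f X
    rw [RingHom.mapMatrix_apply] at hd
    rw [← hd]
    simp only [hf, Complex.coe_algebraMap, ne_eq, Complex.ofReal_eq_zero]
    exact hXdet.ne_zero
  have hinv : (X⁻¹).map f = Y⁻¹ := by
    have hXX : X * X⁻¹ = 1 := mul_nonsing_inv X hXdet
    have hone : Y * (X⁻¹).map f = 1 := by
      rw [hY, ← Matrix.map_mul, hXX, Matrix.map_one _ (map_zero f) (map_one f)]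
    exact (inv_eq_right_inv hone).symm
  have hWmap : (((1 : ℝ) / 2) • (X + X⁻¹)).map f = ((1:ℂ)/2) • (Y + Y⁻¹) := by
    rw [← hinv, hY]
    ext i j
    simp only [Matrix.map_apply, Matrix.smul_apply, Matrix.add_apply, smul_eq_mul, hf,
      Complex.coe_algebraMap]
    push_cast
    ring
  rw [hWmap]
  exact aux_iff Y hYdet
end

section
/- Let θ ∈ (0, 2π) with θ ∉ {π/2, π, 3π/2}, let m_1 = m_3 > 0 and m_2 = m_4 > 0, and let v_1, v_2, v_3, v_4 ∈ ℝ², written v_i = (v_{i1}, v_{i2}), satisfy Σ_{i=1}^4 m_i v_i = 0 together with: (i) −v_{21}cos θ + v_{22}sin θ + v_{41}cos θ − v_{42}sin θ = 0; (ii) m_2(v_{21}sin θ + v_{22}cos θ) − (m_2 + m_4)(v_{31}sin θ + v_{32}cos θ) + m_4(v_{41}sin θ + v_{42}cos θ) = 0; (iii) −(v_{11}sin θ + v_{12}cos θ) + (v_{31}sin θ + v_{32}cos θ) = 0. Then v_1 = (v_{11}, −v_{12})R(2θ), v_3 = (v_{31}, −v_{32})R(2θ), v_2 = (v_{41}, −v_{42})R(2θ),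 and v_4 = (v_{21}, −v_{22})R(2θ). -/
open Real

/-- A row vector of the plane multiplied on the right by the rotation matrix
`R(φ) = [[cos φ, -sin φ], [sin φ, cos φ]]`. -/
noncomputable def rmulRot (v : ℝ × ℝ) (φ : ℝ) : ℝ × ℝ :=
  (v.1 * Real.cos φ + v.2 * Real.sin φ, -v.1 * Real.sin φ + v.2 * Real.cos φ)

/-- The algebraic content of the natural boundary conditions at `t = 0`: for velocities
`v₁, …, v₄ ∈ ℝ²` with vanishing total linear momentum satisfying the first-variation
relations (27)–(29), the velocity-matching relations (25) hold. -/
theorem boundary_velocity_relations_at_0 (θ : ℝ)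
    (hθ : θ ∈ Set.Ioo 0 (2 * π)) (hθ1 : θ ≠ π / 2) (hθ2 : θ ≠ π) (hθ3 : θ ≠ 3 * π / 2)
    (m₁ m₂ m₃ m₄ : ℝ)
    (h13 : m₁ = m₃) (h24 : m₂ = m₄) (hm₁ : 0 < m₁) (hm₂ : 0 < m₂)
    (v₁ v₂ v₃ v₄ : ℝ × ℝ)
    (hmom₁ : m₁ * v₁.1 + m₂ * v₂.1 + m₃ * v₃.1 + m₄ * v₄.1 = 0)
    (hmom₂ : m₁ * v₁.2 + m₂ * v₂.2 + m₃ * v₃.2 + m₄ * v₄.2 = 0)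
    (h27 : -v₂.1 * Real.cos θ + v₂.2 * Real.sin θ + v₄.1 * Real.cos θ - v₄.2 * Real.sin θ = 0)
    (h28 : m₂ * (v₂.1 * Real.sin θ + v₂.2 * Real.cos θ)
        - (m₂ + m₄) * (v₃.1 * Real.sin θ + v₃.2 * Real.cos θ)
        + m₄ * (v₄.1 * Real.sin θ + v₄.2 * Real.cos θ) = 0)
    (h29 : -(v₁.1 * Real.sin θ + v₁.2 * Real.cos θ)
        + (v₃.1 * Real.sin θ + v₃.2 * Real.cos θ) = 0) :
    v₁ = rmulRot (v₁.1, -v₁.2) (2 * θ) ∧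
      v₃ = rmulRot (v₃.1, -v₃.2) (2 * θ) ∧
      v₂ = rmulRot (v₄.1, -v₄.2) (2 * θ) ∧
      v₄ = rmulRot (v₂.1, -v₂.2) (2 * θ) := by
  set s := Real.sin θ with hs
  set c := Real.cos θ with hc
  have hp : s ^ 2 + c ^ 2 = 1 := sin_sq_add_cos_sq θ
  have hsin2 : Real.sin (2 * θ) = 2 * s * c := sin_two_mul θ
  have hcos2 : Real.cos (2 * θ) = c ^ 2 - s ^ 2 := by rw [Real.cos_two_mul, ← hc]; linear_combination hp
  subst h13 h24
  -- S₃ = 0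
  have hS3 : v₃.1 * s + v₃.2 * c = 0 := by
    have hmom : m₁ * (v₁.1 * s + v₁.2 * c) + m₂ * (v₂.1 * s + v₂.2 * c)
        + m₁ * (v₃.1 * s + v₃.2 * c) + m₂ * (v₄.1 * s + v₄.2 * c) = 0 := by
      linear_combination s * hmom₁ + c * hmom₂
    have h2 : (2 * (m₁ + m₂)) * (v₃.1 * s + v₃.2 * c) = 0 := by
      linear_combination hmom - h28 + m₁ * h29
    have hne : (2 : ℝ) * (m₁ + m₂) ≠ 0 := by positivity
    exact (mul_eq_zero.mp h2).resolve_left hne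
  have hS1 : v₁.1 * s + v₁.2 * c = 0 := by linear_combination -h29 + hS3
  have hS24 : v₂.1 * s + v₂.2 * c + (v₄.1 * s + v₄.2 * c) = 0 := by
    have : m₂ * (v₂.1 * s + v₂.2 * c + (v₄.1 * s + v₄.2 * c)) = 0 := by
      linear_combination h28 + (2 * m₂) * hS3
    exact (mul_eq_zero.mp this).resolve_left (ne_of_gt hm₂)
  refine ⟨?_, ?_, ?_, ?_⟩ <;>
    refine Prod.ext ?_ ?_ <;>
      simp only [rmulRot, hsin2, hcos2]
  · linear_combination 2 * s * hS1 - v₁.1 * hp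
  · linear_combination 2 * c * hS1 - v₁.2 * hp
  · linear_combination 2 * s * hS3 - v₃.1 * hp
  · linear_combination 2 * c * hS3 - v₃.2 * hp
  · linear_combination -c * h27 + s * hS24 - v₂.1 * hp
  · linear_combination c * hS24 + s * h27 - v₂.2 * hp
  · linear_combination c * h27 + s * hS24 - v₄.1 * hp
  · linear_combination c * hS24 - s * h27 - v₄.2 * hp
end

section
/- Fix θ ∈ (0, 2π) with θ ∉ {π/2, π, 3π/2}, masses with m_1 = m_3 > 0 and m_2 = m_4 > 0, and T > 0. Then Σ_{i=1}^4 (1/2) m_i ‖Qend_i(a) − Qstart_i(a)‖² → +∞ as ‖a‖ → ∞ over a ∈ ℝ⁶. Consequently, defining Ã(a) as the infimum of the action A(q) over all C¹ paths q : [0, T] → (ℝ²)^4 with q(0) = Qstart(a) and q(T) = Qend(a), one has Ã(a) → +∞ as ‖a‖ → ∞. -/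
open Real MeasureTheory Filter
open scoped ENNReal

noncomputable section

/-- A point of the Euclidean plane from its two coordinates. -/
def pt (x y : ℝ) : EuclideanSpace ℝ (Fin 2) :=
  (WithLp.equiv 2 (Fin 2 → ℝ)).symm ![x, y]

/-- A row vector of the plane multiplied on the right by the rotation matrix `R(φ)`. -/
def rot (v : EuclideanSpace ℝ (Fin 2)) (φ : ℝ) : EuclideanSpace ℝ (Fin 2) :=
  pt (v 0 * Real.cos φ + v 1 * Real.sin φ) (-v 0 * Real.sin φ + v 1 * Real.cos φ)

/-- The starting SPBC configuration `Qstart(a)`. -/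
def Qstart (θ m₁ m₂ m₃ m₄ : ℝ) (a : EuclideanSpace ℝ (Fin 6)) :
    Fin 4 → EuclideanSpace ℝ (Fin 2) :=
  ![rot (pt 0 (-a 2)) θ,
    rot (pt (-a 0) (a 1)) θ,
    rot (pt 0 ((-(m₂ + m₄) * a 1 + m₁ * a 2) / m₃)) θ,
    rot (pt (a 0) (a 1)) θ]

/-- The ending SPBC configuration `Qend(a)`. -/
def Qend (m₁ m₂ m₃ m₄ : ℝ) (a : EuclideanSpace ℝ (Fin 6)) :
    Fin 4 → EuclideanSpace ℝ (Fin 2) :=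
  ![pt (a 3) (a 4),
    pt 0 (-a 5),
    pt (-a 3) (a 4),
    pt 0 ((-(m₁ + m₃) * a 4 + m₂ * a 5) / m₄)]

/-- The Lagrangian action of a path on `[0, T]`, valued in `ℝ≥0∞`. -/
def action (m : Fin 4 → ℝ) (T : ℝ) (q : Fin 4 → ℝ → EuclideanSpace ℝ (Fin 2)) : ℝ≥0∞ :=
  ∫⁻ t in Set.Icc (0 : ℝ) T,
    ENNReal.ofReal ((1 / 2) * ∑ i, m i * ‖deriv (q i) t‖ ^ 2 +
      ∑ i, ∑ j ∈ Finset.Ioi i, m i * m j / ‖q i t - q j t‖)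

/-- `Ã(a)`: the infimum of the action over all `C¹` paths joining `Qstart(a)` to `Qend(a)`. -/
def Atilde (θ m₁ m₂ m₃ m₄ T : ℝ) (a : EuclideanSpace ℝ (Fin 6)) : ℝ≥0∞ :=
  ⨅ q ∈ {q : Fin 4 → ℝ → EuclideanSpace ℝ (Fin 2) |
      (∀ i, ContDiff ℝ 1 (q i)) ∧ (∀ i, q i 0 = Qstart θ m₁ m₂ m₃ m₄ a i) ∧
        (∀ i, q i T = Qend m₁ m₂ m₃ m₄ a i)},
    action ![m₁, m₂, m₃, m₄] T q

/-! ### Auxiliary lemmas -/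

lemma pt_sub (x y x' y' : ℝ) : pt x y - pt x' y' = pt (x - x') (y - y') := by
  ext j; fin_cases j <;> rfl

lemma norm_pt_sq (x y : ℝ) : ‖pt x y‖ ^ 2 = x ^ 2 + y ^ 2 := by
  rw [EuclideanSpace.norm_eq, Real.sq_sqrt (by positivity)]
  simp [pt, Fin.sum_univ_two]

lemma rot_pt (x y φ : ℝ) :
    rot (pt x y) φ = pt (x * Real.cos φ + y * Real.sin φ) (-x * Real.sin φ + y * Real.cos φ) :=
  rfl

/-- The boundary kinetic quantity, written as an explicit function of the coordinates. -/
def Fx (m₁ m₂ m₃ m₄ s c x0 x1 x2 x3 x4 x5 : ℝ) : ℝ :=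
  (1/2)*m₁*((x3 + x2*s)^2 + (x4 + x2*c)^2)
  + (1/2)*m₂*((x0*c - x1*s)^2 + (x5 + x0*s + x1*c)^2)
  + (1/2)*m₃*((x3 + ((-(m₂+m₄)*x1 + m₁*x2)/m₃)*s)^2 + (x4 - ((-(m₂+m₄)*x1 + m₁*x2)/m₃)*c)^2)
  + (1/2)*m₄*((x0*c + x1*s)^2 + (((-(m₁+m₃)*x4 + m₂*x5)/m₄) + x0*s - x1*c)^2)

lemma f_eq (θ m₁ m₂ m₃ m₄ : ℝ) (a : EuclideanSpace ℝ (Fin 6)) :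
    ∑ i, (1 / 2) * ![m₁, m₂, m₃, m₄] i *
        ‖Qend m₁ m₂ m₃ m₄ a i - Qstart θ m₁ m₂ m₃ m₄ a i‖ ^ 2
      = Fx m₁ m₂ m₃ m₄ (Real.sin θ) (Real.cos θ) (a 0) (a 1) (a 2) (a 3) (a 4) (a 5) := by
  simp only [Fin.sum_univ_four, Qend, Qstart, Matrix.cons_val_zero, Matrix.cons_val_one,
    Matrix.head_cons, Matrix.cons_val_two, Matrix.tail_cons, Matrix.cons_val_three,
    rot_pt, pt_sub, norm_pt_sq, Fx]
  ring

lemma Fx_smul (m₁ m₂ m₃ m₄ s c r x0 x1 x2 x3 x4 x5 : ℝ) :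
    Fx m₁ m₂ m₃ m₄ s c (r*x0) (r*x1) (r*x2) (r*x3) (r*x4) (r*x5)
      = r^2 * Fx m₁ m₂ m₃ m₄ s c x0 x1 x2 x3 x4 x5 := by
  unfold Fx; ring

lemma Fx_nonneg (m₁ m₂ s c x0 x1 x2 x3 x4 x5 : ℝ) (hm₁ : 0 < m₁) (hm₂ : 0 < m₂) :
    0 ≤ Fx m₁ m₂ m₁ m₂ s c x0 x1 x2 x3 x4 x5 := by
  unfold Fx; positivity

private lemma sq2_eq_zero {m u v : ℝ} (hm : 0 < m) (h : (1/2)*m*(u^2+v^2) = 0) :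
    u = 0 ∧ v = 0 := by
  have hu : u^2 = 0 := by nlinarith [sq_nonneg u, sq_nonneg v]
  have hv : v^2 = 0 := by nlinarith [sq_nonneg u, sq_nonneg v]
  exact ⟨pow_eq_zero_iff two_ne_zero |>.mp hu, pow_eq_zero_iff two_ne_zero |>.mp hv⟩

lemma Fx_eq_zero (m₁ m₂ s c x0 x1 x2 x3 x4 x5 : ℝ) (hm₁ : 0 < m₁) (hm₂ : 0 < m₂)
    (hs : s ≠ 0) (hc : c ≠ 0)
    (h : Fx m₁ m₂ m₁ m₂ s c x0 x1 x2 x3 x4 x5 = 0) :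
    x0 = 0 ∧ x1 = 0 ∧ x2 = 0 ∧ x3 = 0 ∧ x4 = 0 ∧ x5 = 0 := by
  have h1 : (0:ℝ) ≤ (1/2)*m₁*((x3 + x2*s)^2 + (x4 + x2*c)^2) := by positivity
  have h2 : (0:ℝ) ≤ (1/2)*m₂*((x0*c - x1*s)^2 + (x5 + x0*s + x1*c)^2) := by positivity
  have h3 : (0:ℝ) ≤ (1/2)*m₁*((x3 + ((-(m₂+m₂)*x1 + m₁*x2)/m₁)*s)^2 + (x4 - ((-(m₂+m₂)*x1 + m₁*x2)/m₁)*c)^2) := by positivity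
  have h4 : (0:ℝ) ≤ (1/2)*m₂*((x0*c + x1*s)^2 + (((-(m₁+m₁)*x4 + m₂*x5)/m₂) + x0*s - x1*c)^2) := by positivity
  unfold Fx at h
  obtain ⟨E1, E2⟩ := sq2_eq_zero hm₁ (by linarith :
    (1/2)*m₁*((x3 + x2*s)^2 + (x4 + x2*c)^2) = 0)
  obtain ⟨E3, E4⟩ := sq2_eq_zero hm₂ (by linarith :
    (1/2)*m₂*((x0*c - x1*s)^2 + (x5 + x0*s + x1*c)^2) = 0)
  obtain ⟨E5, E6⟩ := sq2_eq_zero hm₁ (by linarith :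
    (1/2)*m₁*((x3 + ((-(m₂+m₂)*x1 + m₁*x2)/m₁)*s)^2 + (x4 - ((-(m₂+m₂)*x1 + m₁*x2)/m₁)*c)^2) = 0)
  obtain ⟨E7, E8⟩ := sq2_eq_zero hm₂ (by linarith :
    (1/2)*m₂*((x0*c + x1*s)^2 + (((-(m₁+m₁)*x4 + m₂*x5)/m₂) + x0*s - x1*c)^2) = 0)
  have hx1 : x1 = 0 := by
    have hx1s : x1 * s = 0 := by linarith
    rcases mul_eq_zero.mp hx1s with h' | h'
    · exact h'
    · exact absurd h' hs
  have hx0 : x0 = 0 := by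
    have hx0c : x0 * c = 0 := by linarith
    rcases mul_eq_zero.mp hx0c with h' | h'
    · exact h'
    · exact absurd h' hc
  have hx5 : x5 = 0 := by rw [hx0, hx1] at E4; linear_combination E4
  have hx2 : x2 = 0 := by
    rw [hx1] at E6
    have hd : (-(m₂+m₂)*(0:ℝ) + m₁*x2)/m₁ = x2 := by field_simp; ring
    rw [hd] at E6
    have hx2c : x2 * c = 0 := by linear_combination (E2 - E6)/2
    rcases mul_eq_zero.mp hx2c with h' | h'
    · exact h'
    · exact absurd h' hc
  have hx3 : x3 = 0 := by rw [hx2] at E1; linear_combination E1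
  have hx4 : x4 = 0 := by rw [hx2] at E2; linear_combination E2
  exact ⟨hx0, hx1, hx2, hx3, hx4, hx5⟩

lemma part1 (m₁ m₂ s c : ℝ) (hm₁ : 0 < m₁) (hm₂ : 0 < m₂) (hs : s ≠ 0) (hc : c ≠ 0) :
    Tendsto (fun a : EuclideanSpace ℝ (Fin 6) =>
        Fx m₁ m₂ m₁ m₂ s c (a 0) (a 1) (a 2) (a 3) (a 4) (a 5))
      (comap (fun a => ‖a‖) atTop) atTop := by
  set g : EuclideanSpace ℝ (Fin 6) → ℝ :=
    fun a => Fx m₁ m₂ m₁ m₂ s c (a 0) (a 1) (a 2) (a 3) (a 4) (a 5) with hg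
  have hproj : ∀ i, Continuous fun a : EuclideanSpace ℝ (Fin 6) => a i := fun i =>
    (continuous_apply i).comp (PiLp.continuousLinearEquiv 2 ℝ _).continuous
  have hcont : Continuous g := by unfold g; unfold Fx; fun_prop
  obtain ⟨a₀, ha₀, hmin⟩ := (isCompact_sphere (0 : EuclideanSpace ℝ (Fin 6)) 1).exists_isMinOn
    (NormedSpace.sphere_nonempty.mpr zero_le_one) hcont.continuousOn
  have ha₀n : ‖a₀‖ = 1 := mem_sphere_zero_iff_norm.mp ha₀
  set lam := g a₀ with hlam
  have hlam_pos : 0 < lam := by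
    rcases lt_or_eq_of_le
        (Fx_nonneg m₁ m₂ s c (a₀ 0) (a₀ 1) (a₀ 2) (a₀ 3) (a₀ 4) (a₀ 5) hm₁ hm₂) with h' | h'
    · exact h'
    · exfalso
      obtain ⟨e0, e1, e2, e3, e4, e5⟩ :=
        Fx_eq_zero m₁ m₂ s c _ _ _ _ _ _ hm₁ hm₂ hs hc h'.symm
      have : a₀ = 0 := by ext j; fin_cases j <;> assumption
      rw [this] at ha₀n; simp at ha₀n
  have key : ∀ a : EuclideanSpace ℝ (Fin 6), a ≠ 0 → lam * ‖a‖^2 ≤ g a := by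
    intro a ha
    have hr : 0 < ‖a‖ := norm_pos_iff.mpr ha
    have hmem : (‖a‖⁻¹ • a) ∈ Metric.sphere (0 : EuclideanSpace ℝ (Fin 6)) 1 := by
      rw [mem_sphere_zero_iff_norm, norm_smul, norm_inv, norm_norm, inv_mul_cancel₀ hr.ne']
    have hle : lam ≤ g (‖a‖⁻¹ • a) := hmin hmem
    have hgeq : g (‖a‖⁻¹ • a) = (‖a‖⁻¹)^2 * g a := by
      unfold g
      have h' : ∀ i, (‖a‖⁻¹ • a) i = ‖a‖⁻¹ * a i := fun i => rfl
      simp only [h']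
      exact Fx_smul m₁ m₂ m₁ m₂ s c _ _ _ _ _ _ _
    rw [hgeq] at hle
    have hmul := mul_le_mul_of_nonneg_right hle (le_of_lt (pow_pos hr 2))
    calc lam * ‖a‖^2 ≤ ((‖a‖⁻¹)^2 * g a) * ‖a‖^2 := hmul
      _ = g a := by field_simp
  rw [tendsto_atTop]
  intro b
  have htend : Tendsto (fun r : ℝ => lam * r^2) atTop atTop :=
    (tendsto_pow_atTop (two_ne_zero)).const_mul_atTop hlam_pos
  have h2 : ∀ᶠ r : ℝ in atTop, b ≤ lam * r^2 ∧ 1 ≤ r :=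
    (htend.eventually_ge_atTop b).and (eventually_ge_atTop 1)
  rw [eventually_comap]
  filter_upwards [h2] with r hr a hra
  have ha : a ≠ 0 := by
    intro h0; rw [h0] at hra; simp at hra; rw [← hra] at hr; linarith [hr.2]
  calc b ≤ lam * r^2 := hr.1
    _ = lam * ‖a‖^2 := by rw [hra]
    _ ≤ g a := key a ha

lemma sin_ne (θ : ℝ) (hθ : θ ∈ Set.Ioo 0 (2 * π)) (hθ2 : θ ≠ π) : Real.sin θ ≠ 0 := by
  intro h
  rcases Real.sin_eq_zero_iff.mp h with ⟨n, hn⟩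
  have hπ := Real.pi_pos
  have h1 : (0:ℤ) < n := by
    by_contra hh; push_neg at hh
    have : (n:ℝ) ≤ 0 := by exact_mod_cast hh
    nlinarith [hθ.1]
  have h2 : n < 2 := by
    by_contra hh; push_neg at hh
    have : (2:ℝ) ≤ (n:ℝ) := by exact_mod_cast hh
    nlinarith [hθ.2]
  have hn1 : n = 1 := by omega
  rw [hn1] at hn; push_cast at hn
  exact hθ2 (by linarith)

lemma cos_ne (θ : ℝ) (hθ : θ ∈ Set.Ioo 0 (2 * π)) (hθ1 : θ ≠ π / 2) (hθ3 : θ ≠ 3 * π / 2) :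
    Real.cos θ ≠ 0 := by
  intro h
  rcases Real.cos_eq_zero_iff.mp h with ⟨k, hk⟩
  have hπ := Real.pi_pos
  have h1 : (0:ℤ) < 2*k+1 := by
    by_contra hh; push_neg at hh
    have : ((2*k+1 : ℤ):ℝ) ≤ 0 := by exact_mod_cast hh
    push_cast at this
    nlinarith [hθ.1]
  have h2 : 2*k+1 < 4 := by
    by_contra hh; push_neg at hh
    have : (4:ℝ) ≤ ((2*k+1 : ℤ):ℝ) := by exact_mod_cast hh
    push_cast at this
    nlinarith [hθ.2]
  have hk' : k = 0 ∨ k = 1 := by omega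
  rcases hk' with h' | h' <;> rw [h'] at hk <;> push_cast at hk
  · exact hθ1 (by linarith)
  · exact hθ3 (by linarith)

lemma action_lower_bound (m : Fin 4 → ℝ) (hm : ∀ i, 0 ≤ m i) (T : ℝ) (hT : 0 < T)
    (q : Fin 4 → ℝ → EuclideanSpace ℝ (Fin 2)) (hq : ∀ i, ContDiff ℝ 1 (q i)) :
    ENNReal.ofReal ((∑ i, (1/2) * m i * ‖q i T - q i 0‖^2) / T)
      ≤ action m T q := by
  have hderiv_cont : ∀ i, Continuous (deriv (q i)) := fun i => (hq i).continuous_deriv le_rfl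
  have keyI : ∀ i, ‖q i T - q i 0‖^2 / T ≤ ∫ t in (0:ℝ)..T, ‖deriv (q i) t‖^2 := by
    intro i
    set v := fun t => ‖deriv (q i) t‖ with hv_def
    have hv : Continuous v := (hderiv_cont i).norm
    have hI1int : IntervalIntegrable v volume 0 T := hv.intervalIntegrable 0 T
    have hI2int : IntervalIntegrable (fun t => v t ^ 2) volume 0 T :=
      (hv.pow 2).intervalIntegrable 0 T
    set D := ‖q i T - q i 0‖ with hD_def
    set I1 := ∫ t in (0:ℝ)..T, v t with hI1_def
    set I2 := ∫ t in (0:ℝ)..T, v t ^ 2 with hI2_def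
    have hD : D ≤ I1 := by
      have hftc : ∫ t in (0:ℝ)..T, deriv (q i) t = q i T - q i 0 :=
        intervalIntegral.integral_deriv_eq_sub
          (fun x _ => ((hq i).differentiable one_ne_zero).differentiableAt)
          ((hderiv_cont i).intervalIntegrable 0 T)
      calc D = ‖∫ t in (0:ℝ)..T, deriv (q i) t‖ := by rw [hftc]
        _ ≤ I1 := intervalIntegral.norm_integral_le_integral_norm hT.le
    have hquad : 0 ≤ ∫ t in (0:ℝ)..T, (v t - D/T)^2 :=
      intervalIntegral.integral_nonneg hT.le (fun t _ => sq_nonneg _)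
    have hexp : ∫ t in (0:ℝ)..T, (v t - D/T)^2
        = I2 - 2*(D/T)*I1 + (D/T)^2*T := by
      have h1 : ∀ t, (v t - D/T)^2 = v t^2 - (2*(D/T))*(v t) + (D/T)^2 := by intro t; ring
      simp_rw [h1]
      rw [intervalIntegral.integral_add (hI2int.sub (hI1int.const_mul (2*(D/T))))
        intervalIntegrable_const,
        intervalIntegral.integral_sub hI2int (hI1int.const_mul (2*(D/T))),
        intervalIntegral.integral_const_mul, intervalIntegral.integral_const]
      simp only [smul_eq_mul]
      ring
    have hkey : 0 ≤ I2 - 2*(D/T)*I1 + (D/T)^2*T := hexp ▸ hquad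
    have hkey2 : 0 ≤ I2*T - 2*D*I1 + D^2 := by
      have hmul := mul_le_mul_of_nonneg_right hkey hT.le
      have hexp2 : (I2 - 2*(D/T)*I1 + (D/T)^2*T)*T = I2*T - 2*D*I1 + D^2 := by
        field_simp
      rw [zero_mul, hexp2] at hmul
      linarith
    rw [div_le_iff₀ hT]
    have hDnn : 0 ≤ D := norm_nonneg _
    nlinarith [mul_le_mul_of_nonneg_left hD hDnn]
  set K : ℝ → ℝ := fun t => (1 / 2) * ∑ i, m i * ‖deriv (q i) t‖ ^ 2 with hK_def
  have hKcont : Continuous K :=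
    continuous_const.mul (continuous_finset_sum _ fun i _ =>
      continuous_const.mul ((hderiv_cont i).norm.pow 2))
  have hKnn : ∀ t, 0 ≤ K t := by
    intro t
    apply mul_nonneg (by norm_num)
    exact Finset.sum_nonneg fun i _ => mul_nonneg (hm i) (sq_nonneg _)
  have hKint : ∫ t in (0:ℝ)..T, K t
      = ∑ i, (1/2) * m i * ∫ t in (0:ℝ)..T, ‖deriv (q i) t‖^2 := by
    unfold K
    rw [intervalIntegral.integral_const_mul,
      intervalIntegral.integral_finset_sum (f := fun i t => m i * ‖deriv (q i) t‖ ^ 2) (fun i _ =>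
        (((hderiv_cont i).norm.pow 2).intervalIntegrable 0 T).const_mul (m i)),
      Finset.mul_sum]
    congr 1; funext i
    rw [intervalIntegral.integral_const_mul]; ring
  have hsum_le : (∑ i, (1/2) * m i * ‖q i T - q i 0‖^2) / T ≤ ∫ t in (0:ℝ)..T, K t := by
    rw [hKint, Finset.sum_div]
    apply Finset.sum_le_sum
    intro i _
    have h1 : (1/2) * m i * ‖q i T - q i 0‖^2 / T
        = (1/2) * m i * (‖q i T - q i 0‖^2 / T) := by ring
    rw [h1]
    exact mul_le_mul_of_nonneg_left (keyI i) (mul_nonneg (by norm_num) (hm i))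
  have hIcc : ∫ t in (0:ℝ)..T, K t = ∫ t in Set.Icc (0:ℝ) T, K t := by
    rw [intervalIntegral.integral_of_le hT.le, ← integral_Icc_eq_integral_Ioc]
  have hKintegrable : IntegrableOn K (Set.Icc (0:ℝ) T) volume := hKcont.integrableOn_Icc
  have hconv : ENNReal.ofReal (∫ t in Set.Icc (0:ℝ) T, K t)
      = ∫⁻ t in Set.Icc (0:ℝ) T, ENNReal.ofReal (K t) :=
    ofReal_integral_eq_lintegral_ofReal hKintegrable (ae_of_all _ hKnn)
  calc ENNReal.ofReal ((∑ i, (1/2) * m i * ‖q i T - q i 0‖^2) / T)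
      ≤ ENNReal.ofReal (∫ t in Set.Icc (0:ℝ) T, K t) := by
        apply ENNReal.ofReal_le_ofReal; rw [← hIcc]; exact hsum_le
    _ = ∫⁻ t in Set.Icc (0:ℝ) T, ENNReal.ofReal (K t) := hconv
    _ ≤ action m T q := by
        apply lintegral_mono
        intro t
        apply ENNReal.ofReal_le_ofReal
        have h0 : 0 ≤ ∑ i, ∑ j ∈ Finset.Ioi i, m i * m j / ‖q i t - q j t‖ :=
          Finset.sum_nonneg fun i _ => Finset.sum_nonneg fun j _ =>
            div_nonneg (mul_nonneg (hm i) (hm j)) (norm_nonneg _)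
        unfold K
        linarith

/-- Coercivity of the SPBC action: the kinetic lower bound and hence `Ã(a)` tend to `∞`
as `‖a‖ → ∞`. -/
theorem Atilde_tendsto_top (θ : ℝ) (hθ : θ ∈ Set.Ioo 0 (2 * π))
    (hθ1 : θ ≠ π / 2) (hθ2 : θ ≠ π) (hθ3 : θ ≠ 3 * π / 2)
    (m₁ m₂ m₃ m₄ : ℝ) (h13 : m₁ = m₃) (h24 : m₂ = m₄) (hm₁ : 0 < m₁) (hm₂ : 0 < m₂)
    (T : ℝ) (hT : 0 < T) :
    Tendsto (fun a : EuclideanSpace ℝ (Fin 6) =>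
        ∑ i, (1 / 2) * ![m₁, m₂, m₃, m₄] i *
          ‖Qend m₁ m₂ m₃ m₄ a i - Qstart θ m₁ m₂ m₃ m₄ a i‖ ^ 2)
      (comap (fun a => ‖a‖) atTop) atTop ∧
    Tendsto (fun a : EuclideanSpace ℝ (Fin 6) => Atilde θ m₁ m₂ m₃ m₄ T a)
      (comap (fun a => ‖a‖) atTop) (nhds ⊤) := by
  subst h13; subst h24
  have hs : Real.sin θ ≠ 0 := sin_ne θ hθ hθ2
  have hc : Real.cos θ ≠ 0 := cos_ne θ hθ hθ1 hθ3
  have hp1 : Tendsto (fun a : EuclideanSpace ℝ (Fin 6) =>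
      ∑ i, (1 / 2) * ![m₁, m₂, m₁, m₂] i *
        ‖Qend m₁ m₂ m₁ m₂ a i - Qstart θ m₁ m₂ m₁ m₂ a i‖ ^ 2)
      (comap (fun a => ‖a‖) atTop) atTop :=
    (tendsto_congr fun a => f_eq θ m₁ m₂ m₁ m₂ a).mpr (part1 m₁ m₂ _ _ hm₁ hm₂ hs hc)
  refine ⟨hp1, ?_⟩
  have hmnn : ∀ i, 0 ≤ ![m₁, m₂, m₁, m₂] i := by
    intro i; fin_cases i <;> simp [hm₁.le, hm₂.le]
  have hlow : ∀ a : EuclideanSpace ℝ (Fin 6),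
      ENNReal.ofReal ((∑ i, (1 / 2) * ![m₁, m₂, m₁, m₂] i *
          ‖Qend m₁ m₂ m₁ m₂ a i - Qstart θ m₁ m₂ m₁ m₂ a i‖ ^ 2) / T)
        ≤ Atilde θ m₁ m₂ m₁ m₂ T a := by
    intro a
    rw [Atilde]
    refine le_iInf₂ fun q hq => ?_
    obtain ⟨hC, h0, hTend⟩ := hq
    have hb := action_lower_bound ![m₁, m₂, m₁, m₂] hmnn T hT q hC
    simp only [h0, hTend] at hb
    exact hb
  have hdiv : Tendsto (fun a : EuclideanSpace ℝ (Fin 6) =>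
      (∑ i, (1 / 2) * ![m₁, m₂, m₁, m₂] i *
        ‖Qend m₁ m₂ m₁ m₂ a i - Qstart θ m₁ m₂ m₁ m₂ a i‖ ^ 2) / T)
      (comap (fun a => ‖a‖) atTop) atTop := hp1.atTop_div_const hT
  exact tendsto_nhds_top_mono (ENNReal.tendsto_ofReal_atTop.comp hdiv)
    (Eventually.of_forall hlow)

end
end

section
/- Let m_1 = m_3 > 0, m_2 = m_4 > 0, r_1, r_2 > 0, ω ≠ 0 and α_0 ∈ ℝ. Define the rhomboidal circular motion q_k(t) = ρ_k (cos(ωt + (k−1)π/2 + α_0), sin(ωt + (k−1)π/2 + α_0)) for k = 1, 2, 3, 4, where ρ_1 = ρ_3 = r_1 and ρ_2 = ρ_4 = r_2. Then q = (q_1, q_2, q_3, q_4) is a solution of Newton's equations of the planar four-body problem for all t ∈ ℝ if and only if ω² = 2m_2/(r_1² + r_2²)^{3/2} + m_1/(4r_1³) and ω² = 2m_1/(r_1² + r_2²)^{3/2} + m_2/(4r_2³). -/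
open Real

noncomputable section

/-- `q` is a solution of Newton's equations of the planar four-body problem with masses `m`
on the set `I`. -/
def IsNewtonSolution (m : Fin 4 → ℝ) (I : Set ℝ)
    (q : Fin 4 → ℝ → EuclideanSpace ℝ (Fin 2)) : Prop :=
  (∀ t ∈ I, ∀ i j : Fin 4, i ≠ j → q i t ≠ q j t) ∧
    ∀ i : Fin 4, ∀ t ∈ I, DifferentiableAt ℝ (q i) t ∧
      ∃ a : EuclideanSpace ℝ (Fin 2), HasDerivAt (deriv (q i)) a t ∧
        m i • a = ∑ j ∈ Finset.univ.erase i,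
          ((m i * m j) / ‖q j t - q i t‖ ^ 3) • (q j t - q i t)

/-- The rhomboidal circular motion `q_k(t) = ρ_k (cos(ωt + (k-1)π/2 + α₀),
sin(ωt + (k-1)π/2 + α₀))` with `ρ₁ = ρ₃ = r₁`, `ρ₂ = ρ₄ = r₂`. -/
def rhomboidalMotion (r₁ r₂ ω α₀ : ℝ) : Fin 4 → ℝ → EuclideanSpace ℝ (Fin 2) :=
  fun k t =>
    pt (![r₁, r₂, r₁, r₂] k * Real.cos (ω * t + (k : ℕ) * (π / 2) + α₀))
       (![r₁, r₂, r₁, r₂] k * Real.sin (ω * t + (k : ℕ) * (π / 2) + α₀))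

/-! ### Auxiliary lemmas -/

lemma pt_sub_s12 (a b c d : ℝ) : pt a b - pt c d = pt (a-c) (b-d) := by
  ext i; fin_cases i <;> simp [pt]
lemma pt_smul (r a b : ℝ) : r • pt a b = pt (r*a) (r*b) := by
  ext i; fin_cases i <;> simp [pt]
lemma pt_add (a b c d : ℝ) : pt a b + pt c d = pt (a+c) (b+d) := by
  ext i; fin_cases i <;> simp [pt]
lemma norm_pt (x y : ℝ) : ‖pt x y‖ = Real.sqrt (x^2 + y^2) := by
  simp [pt, EuclideanSpace.norm_eq, Fin.sum_univ_two, sq_abs]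
lemma pt_congr {a b c d : ℝ} (h1 : a = c) (h2 : b = d) : pt a b = pt c d := by rw [h1, h2]
lemma sqrt_cube (a : ℝ) (ha : 0 ≤ a) : Real.sqrt a ^ 3 = a ^ ((3:ℝ)/2) := by
  rw [Real.sqrt_eq_rpow, ← Real.rpow_natCast (a ^ ((1:ℝ)/2)) 3, ← Real.rpow_mul ha]
  norm_num
lemma hasDerivAt_pt {f g : ℝ → ℝ} {f' g' : ℝ} {t : ℝ} (hf : HasDerivAt f f' t)
    (hg : HasDerivAt g g' t) :
    HasDerivAt (fun t => pt (f t) (g t)) (pt f' g') t := by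
  have h : HasDerivAt (fun t => (![f t, g t] : Fin 2 → ℝ)) ![f', g'] t := by
    rw [hasDerivAt_pi]
    intro i; fin_cases i <;> simpa
  exact ((EuclideanSpace.equiv (Fin 2) ℝ).symm :
    (Fin 2 → ℝ) →L[ℝ] EuclideanSpace ℝ (Fin 2)).hasFDerivAt.comp_hasDerivAt t h

variable (r₁ r₂ ω α₀ : ℝ)

lemma rm0 (t : ℝ) : rhomboidalMotion r₁ r₂ ω α₀ 0 t
    = pt (r₁ * Real.cos (ω*t+α₀)) (r₁ * Real.sin (ω*t+α₀)) := by
  simp [rhomboidalMotion]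
lemma rm1 (t : ℝ) : rhomboidalMotion r₁ r₂ ω α₀ 1 t
    = pt (-(r₂ * Real.sin (ω*t+α₀))) (r₂ * Real.cos (ω*t+α₀)) := by
  simp only [rhomboidalMotion]
  rw [show ω*t + (((1:Fin 4):ℕ):ℝ) * (π/2) + α₀ = (ω*t+α₀) + π/2 by
      push_cast [show ((1:Fin 4):ℕ) = 1 from rfl]; ring,
    Real.cos_add_pi_div_two, Real.sin_add_pi_div_two]
  exact pt_congr (by simp only [Matrix.cons_val_one, Matrix.head_cons, Matrix.cons_val_zero]; ring)
    (by simp only [Matrix.cons_val_one, Matrix.head_cons, Matrix.cons_val_zero])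
lemma rm2 (t : ℝ) : rhomboidalMotion r₁ r₂ ω α₀ 2 t
    = pt (-(r₁ * Real.cos (ω*t+α₀))) (-(r₁ * Real.sin (ω*t+α₀))) := by
  simp only [rhomboidalMotion]
  rw [show ω*t + (((2:Fin 4):ℕ):ℝ) * (π/2) + α₀ = (ω*t+α₀) + π by
      push_cast [show ((2:Fin 4):ℕ) = 2 from rfl]; ring,
    Real.cos_add_pi, Real.sin_add_pi]
  exact pt_congr (by simp) (by simp)
lemma rm3 (t : ℝ) : rhomboidalMotion r₁ r₂ ω α₀ 3 t
    = pt (r₂ * Real.sin (ω*t+α₀)) (-(r₂ * Real.cos (ω*t+α₀))) := by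
  simp only [rhomboidalMotion]
  rw [show ω*t + (((3:Fin 4):ℕ):ℝ) * (π/2) + α₀ = ((ω*t+α₀) + π) + π/2 by
      push_cast [show ((3:Fin 4):ℕ) = 3 from rfl]; ring,
    Real.cos_add_pi_div_two, Real.sin_add_pi_div_two, Real.cos_add_pi, Real.sin_add_pi]
  exact pt_congr (by simp) (by simp)

lemma rm_hasDeriv (k : Fin 4) (t : ℝ) :
    HasDerivAt (rhomboidalMotion r₁ r₂ ω α₀ k)
      (pt (-(![r₁,r₂,r₁,r₂] k * (ω * Real.sin (ω*t + (k:ℕ)*(π/2) + α₀))))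
          (![r₁,r₂,r₁,r₂] k * (ω * Real.cos (ω*t + (k:ℕ)*(π/2) + α₀)))) t := by
  have ha : HasDerivAt (fun t => ω*t + (k:ℕ)*(π/2) + α₀) ω t := by
    simpa using (((hasDerivAt_id t).const_mul ω).add_const ((k:ℕ)*(π/2) : ℝ)).add_const α₀
  apply hasDerivAt_pt
  · have := ha.cos.const_mul (![r₁,r₂,r₁,r₂] k)
    exact this.congr_deriv (by ring)
  · have := ha.sin.const_mul (![r₁,r₂,r₁,r₂] k)
    exact this.congr_deriv (by ring)

lemma rm_deriv_eq (k : Fin 4) : deriv (rhomboidalMotion r₁ r₂ ω α₀ k)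
    = fun t => pt (-(![r₁,r₂,r₁,r₂] k * (ω * Real.sin (ω*t + (k:ℕ)*(π/2) + α₀))))
          (![r₁,r₂,r₁,r₂] k * (ω * Real.cos (ω*t + (k:ℕ)*(π/2) + α₀))) :=
  funext fun t => (rm_hasDeriv r₁ r₂ ω α₀ k t).deriv

lemma rm_hasDeriv2 (k : Fin 4) (t : ℝ) :
    HasDerivAt (deriv (rhomboidalMotion r₁ r₂ ω α₀ k))
      ((-(ω^2)) • rhomboidalMotion r₁ r₂ ω α₀ k t) t := by
  rw [rm_deriv_eq]
  have ha : HasDerivAt (fun t => ω*t + (k:ℕ)*(π/2) + α₀) ω t := by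
    simpa using (((hasDerivAt_id t).const_mul ω).add_const ((k:ℕ)*(π/2) : ℝ)).add_const α₀
  have h1 : HasDerivAt (fun t => -(![r₁,r₂,r₁,r₂] k * (ω * Real.sin (ω*t + (k:ℕ)*(π/2) + α₀))))
      (-(ω^2) * (![r₁,r₂,r₁,r₂] k * Real.cos (ω*t + (k:ℕ)*(π/2) + α₀))) t := by
    have := (((ha.sin.const_mul ω).const_mul (![r₁,r₂,r₁,r₂] k))).neg
    exact this.congr_deriv (by ring)
  have h2 : HasDerivAt (fun t => ![r₁,r₂,r₁,r₂] k * (ω * Real.cos (ω*t + (k:ℕ)*(π/2) + α₀)))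
      (-(ω^2) * (![r₁,r₂,r₁,r₂] k * Real.sin (ω*t + (k:ℕ)*(π/2) + α₀))) t := by
    have := (ha.cos.const_mul ω).const_mul (![r₁,r₂,r₁,r₂] k)
    exact this.congr_deriv (by ring)
  have h := hasDerivAt_pt h1 h2
  rw [show rhomboidalMotion r₁ r₂ ω α₀ k t
      = pt (![r₁,r₂,r₁,r₂] k * Real.cos (ω*t + (k:ℕ)*(π/2) + α₀))
           (![r₁,r₂,r₁,r₂] k * Real.sin (ω*t + (k:ℕ)*(π/2) + α₀)) from rfl, pt_smul]
  exact h

lemma nrm01 (t : ℝ) : ‖rhomboidalMotion r₁ r₂ ω α₀ 1 t - rhomboidalMotion r₁ r₂ ω α₀ 0 t‖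
    = Real.sqrt (r₁^2+r₂^2) := by
  have hCS := Real.sin_sq_add_cos_sq (ω*t+α₀)
  rw [rm1, rm0, pt_sub_s12, norm_pt]
  congr 1; linear_combination (r₁^2+r₂^2) * hCS
lemma nrm03 (t : ℝ) : ‖rhomboidalMotion r₁ r₂ ω α₀ 3 t - rhomboidalMotion r₁ r₂ ω α₀ 0 t‖
    = Real.sqrt (r₁^2+r₂^2) := by
  have hCS := Real.sin_sq_add_cos_sq (ω*t+α₀)
  rw [rm3, rm0, pt_sub_s12, norm_pt]
  congr 1; linear_combination (r₁^2+r₂^2) * hCS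
lemma nrm12 (t : ℝ) : ‖rhomboidalMotion r₁ r₂ ω α₀ 2 t - rhomboidalMotion r₁ r₂ ω α₀ 1 t‖
    = Real.sqrt (r₁^2+r₂^2) := by
  have hCS := Real.sin_sq_add_cos_sq (ω*t+α₀)
  rw [rm2, rm1, pt_sub_s12, norm_pt]
  congr 1; linear_combination (r₁^2+r₂^2) * hCS
lemma nrm23 (t : ℝ) : ‖rhomboidalMotion r₁ r₂ ω α₀ 3 t - rhomboidalMotion r₁ r₂ ω α₀ 2 t‖
    = Real.sqrt (r₁^2+r₂^2) := by
  have hCS := Real.sin_sq_add_cos_sq (ω*t+α₀)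
  rw [rm3, rm2, pt_sub_s12, norm_pt]
  congr 1; linear_combination (r₁^2+r₂^2) * hCS
lemma nrm02 (hr₁ : 0 ≤ r₁) (t : ℝ) :
    ‖rhomboidalMotion r₁ r₂ ω α₀ 2 t - rhomboidalMotion r₁ r₂ ω α₀ 0 t‖ = 2*r₁ := by
  have hCS := Real.sin_sq_add_cos_sq (ω*t+α₀)
  rw [rm2, rm0, pt_sub_s12, norm_pt,
    show (-(r₁ * Real.cos (ω*t+α₀)) - r₁ * Real.cos (ω*t+α₀))^2
        + (-(r₁ * Real.sin (ω*t+α₀)) - r₁ * Real.sin (ω*t+α₀))^2 = (2*r₁)^2 by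
      linear_combination (4*r₁^2)*hCS]
  exact Real.sqrt_sq (by positivity)
lemma nrm13 (hr₂ : 0 ≤ r₂) (t : ℝ) :
    ‖rhomboidalMotion r₁ r₂ ω α₀ 3 t - rhomboidalMotion r₁ r₂ ω α₀ 1 t‖ = 2*r₂ := by
  have hCS := Real.sin_sq_add_cos_sq (ω*t+α₀)
  rw [rm3, rm1, pt_sub_s12, norm_pt,
    show (r₂ * Real.sin (ω*t+α₀) - -(r₂ * Real.sin (ω*t+α₀)))^2
        + (-(r₂ * Real.cos (ω*t+α₀)) - r₂ * Real.cos (ω*t+α₀))^2 = (2*r₂)^2 by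
      linear_combination (4*r₂^2)*hCS]
  exact Real.sqrt_sq (by positivity)

lemma force0 (m₁ m₂ : ℝ) (hr₁ : 0 < r₁) (hr₂ : 0 < r₂) (t : ℝ) :
    (∑ j ∈ Finset.univ.erase (0:Fin 4),
      ((![m₁,m₂,m₁,m₂] (0:Fin 4) * ![m₁,m₂,m₁,m₂] j)
          / ‖rhomboidalMotion r₁ r₂ ω α₀ j t - rhomboidalMotion r₁ r₂ ω α₀ 0 t‖ ^ 3)
        • (rhomboidalMotion r₁ r₂ ω α₀ j t - rhomboidalMotion r₁ r₂ ω α₀ 0 t))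
    = (-(m₁ * (2*m₂/(r₁^2+r₂^2)^((3:ℝ)/2) + m₁/(4*r₁^3)))) • rhomboidalMotion r₁ r₂ ω α₀ 0 t := by
  have hd3 : ((r₁^2+r₂^2) ^ ((3:ℝ)/2)) ≠ 0 := by positivity
  have hr1' : r₁ ≠ 0 := hr₁.ne'
  rw [show (Finset.univ.erase (0:Fin 4)) = {1,2,3} from by decide,
    Finset.sum_insert (by decide), Finset.sum_insert (by decide), Finset.sum_singleton,
    nrm01, nrm02 r₁ r₂ ω α₀ hr₁.le, nrm03, sqrt_cube _ (by positivity),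
    rm0, rm1, rm2, rm3]
  simp only [pt_sub_s12, pt_smul, pt_add, Matrix.cons_val_zero, Matrix.cons_val_one, Matrix.head_cons,
    Matrix.cons_val_two, Matrix.tail_cons, Matrix.cons_val_three]
  refine pt_congr ?_ ?_ <;> field_simp <;> ring

lemma force1 (m₁ m₂ : ℝ) (hr₁ : 0 < r₁) (hr₂ : 0 < r₂) (t : ℝ) :
    (∑ j ∈ Finset.univ.erase (1:Fin 4),
      ((![m₁,m₂,m₁,m₂] (1:Fin 4) * ![m₁,m₂,m₁,m₂] j)
          / ‖rhomboidalMotion r₁ r₂ ω α₀ j t - rhomboidalMotion r₁ r₂ ω α₀ 1 t‖ ^ 3)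
        • (rhomboidalMotion r₁ r₂ ω α₀ j t - rhomboidalMotion r₁ r₂ ω α₀ 1 t))
    = (-(m₂ * (2*m₁/(r₁^2+r₂^2)^((3:ℝ)/2) + m₂/(4*r₂^3)))) • rhomboidalMotion r₁ r₂ ω α₀ 1 t := by
  have hd3 : ((r₁^2+r₂^2) ^ ((3:ℝ)/2)) ≠ 0 := by positivity
  have hr2' : r₂ ≠ 0 := hr₂.ne'
  rw [show (Finset.univ.erase (1:Fin 4)) = {0,2,3} from by decide,
    Finset.sum_insert (by decide), Finset.sum_insert (by decide), Finset.sum_singleton,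
    norm_sub_rev (rhomboidalMotion r₁ r₂ ω α₀ 0 t) (rhomboidalMotion r₁ r₂ ω α₀ 1 t),
    nrm01, nrm12, nrm13 r₁ r₂ ω α₀ hr₂.le, sqrt_cube _ (by positivity),
    rm0, rm1, rm2, rm3]
  simp only [pt_sub_s12, pt_smul, pt_add, Matrix.cons_val_zero, Matrix.cons_val_one, Matrix.head_cons,
    Matrix.cons_val_two, Matrix.tail_cons, Matrix.cons_val_three]
  refine pt_congr ?_ ?_ <;> field_simp <;> ring

lemma force2 (m₁ m₂ : ℝ) (hr₁ : 0 < r₁) (hr₂ : 0 < r₂) (t : ℝ) :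
    (∑ j ∈ Finset.univ.erase (2:Fin 4),
      ((![m₁,m₂,m₁,m₂] (2:Fin 4) * ![m₁,m₂,m₁,m₂] j)
          / ‖rhomboidalMotion r₁ r₂ ω α₀ j t - rhomboidalMotion r₁ r₂ ω α₀ 2 t‖ ^ 3)
        • (rhomboidalMotion r₁ r₂ ω α₀ j t - rhomboidalMotion r₁ r₂ ω α₀ 2 t))
    = (-(m₁ * (2*m₂/(r₁^2+r₂^2)^((3:ℝ)/2) + m₁/(4*r₁^3)))) • rhomboidalMotion r₁ r₂ ω α₀ 2 t := by
  have hd3 : ((r₁^2+r₂^2) ^ ((3:ℝ)/2)) ≠ 0 := by positivity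
  have hr1' : r₁ ≠ 0 := hr₁.ne'
  rw [show (Finset.univ.erase (2:Fin 4)) = {0,1,3} from by decide,
    Finset.sum_insert (by decide), Finset.sum_insert (by decide), Finset.sum_singleton,
    norm_sub_rev (rhomboidalMotion r₁ r₂ ω α₀ 0 t) (rhomboidalMotion r₁ r₂ ω α₀ 2 t),
    norm_sub_rev (rhomboidalMotion r₁ r₂ ω α₀ 1 t) (rhomboidalMotion r₁ r₂ ω α₀ 2 t),
    nrm02 r₁ r₂ ω α₀ hr₁.le, nrm12, nrm23, sqrt_cube _ (by positivity),
    rm0, rm1, rm2, rm3]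
  simp only [pt_sub_s12, pt_smul, pt_add, Matrix.cons_val_zero, Matrix.cons_val_one, Matrix.head_cons,
    Matrix.cons_val_two, Matrix.tail_cons, Matrix.cons_val_three]
  refine pt_congr ?_ ?_ <;> field_simp <;> ring

lemma force3 (m₁ m₂ : ℝ) (hr₁ : 0 < r₁) (hr₂ : 0 < r₂) (t : ℝ) :
    (∑ j ∈ Finset.univ.erase (3:Fin 4),
      ((![m₁,m₂,m₁,m₂] (3:Fin 4) * ![m₁,m₂,m₁,m₂] j)
          / ‖rhomboidalMotion r₁ r₂ ω α₀ j t - rhomboidalMotion r₁ r₂ ω α₀ 3 t‖ ^ 3)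
        • (rhomboidalMotion r₁ r₂ ω α₀ j t - rhomboidalMotion r₁ r₂ ω α₀ 3 t))
    = (-(m₂ * (2*m₁/(r₁^2+r₂^2)^((3:ℝ)/2) + m₂/(4*r₂^3)))) • rhomboidalMotion r₁ r₂ ω α₀ 3 t := by
  have hd3 : ((r₁^2+r₂^2) ^ ((3:ℝ)/2)) ≠ 0 := by positivity
  have hr2' : r₂ ≠ 0 := hr₂.ne'
  rw [show (Finset.univ.erase (3:Fin 4)) = {0,1,2} from by decide,
    Finset.sum_insert (by decide), Finset.sum_insert (by decide), Finset.sum_singleton,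
    norm_sub_rev (rhomboidalMotion r₁ r₂ ω α₀ 0 t) (rhomboidalMotion r₁ r₂ ω α₀ 3 t),
    norm_sub_rev (rhomboidalMotion r₁ r₂ ω α₀ 1 t) (rhomboidalMotion r₁ r₂ ω α₀ 3 t),
    norm_sub_rev (rhomboidalMotion r₁ r₂ ω α₀ 2 t) (rhomboidalMotion r₁ r₂ ω α₀ 3 t),
    nrm03, nrm13 r₁ r₂ ω α₀ hr₂.le, nrm23, sqrt_cube _ (by positivity),
    rm0, rm1, rm2, rm3]
  simp only [pt_sub_s12, pt_smul, pt_add, Matrix.cons_val_zero, Matrix.cons_val_one, Matrix.head_cons,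
    Matrix.cons_val_two, Matrix.tail_cons, Matrix.cons_val_three]
  refine pt_congr ?_ ?_ <;> field_simp <;> ring

lemma rm_ne (hr₁ : 0 < r₁) (hr₂ : 0 < r₂) (t : ℝ) (i j : Fin 4) (hij : i ≠ j) :
    rhomboidalMotion r₁ r₂ ω α₀ i t ≠ rhomboidalMotion r₁ r₂ ω α₀ j t := by
  have key : ∀ a b : Fin 4, ‖rhomboidalMotion r₁ r₂ ω α₀ b t - rhomboidalMotion r₁ r₂ ω α₀ a t‖ ≠ 0 →
      rhomboidalMotion r₁ r₂ ω α₀ a t ≠ rhomboidalMotion r₁ r₂ ω α₀ b t := by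
    intro a b h he
    exact h (by rw [he, sub_self, norm_zero])
  have hs : Real.sqrt (r₁^2+r₂^2) ≠ 0 := ne_of_gt (Real.sqrt_pos.mpr (by positivity))
  have h01 := key 0 1 (by rw [nrm01]; exact hs)
  have h02 := key 0 2 (by rw [nrm02 r₁ r₂ ω α₀ hr₁.le]; positivity)
  have h03 := key 0 3 (by rw [nrm03]; exact hs)
  have h12 := key 1 2 (by rw [nrm12]; exact hs)
  have h13 := key 1 3 (by rw [nrm13 r₁ r₂ ω α₀ hr₂.le]; positivity)
  have h23 := key 2 3 (by rw [nrm23]; exact hs)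
  have h10 := h01.symm
  have h20 := h02.symm
  have h30 := h03.symm
  have h21 := h12.symm
  have h31 := h13.symm
  have h32 := h23.symm
  fin_cases i <;> fin_cases j <;> first
    | exact absurd rfl hij
    | assumption

/-- The rhomboidal circular motion is a solution of Newton's equations of the planar
four-body problem (for all time) if and only if the two rhomboidal central configuration
equations hold. -/
theorem rhomboidal_isSolution_iff (m₁ m₂ m₃ m₄ : ℝ)
    (h13 : m₁ = m₃) (h24 : m₂ = m₄) (hm₁ : 0 < m₁) (hm₂ : 0 < m₂)
    (r₁ r₂ : ℝ) (hr₁ : 0 < r₁) (hr₂ : 0 < r₂) (ω : ℝ) (hω : ω ≠ 0) (α₀ : ℝ) :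
    IsNewtonSolution ![m₁, m₂, m₃, m₄] Set.univ (rhomboidalMotion r₁ r₂ ω α₀) ↔
      (ω ^ 2 = 2 * m₂ / (r₁ ^ 2 + r₂ ^ 2) ^ ((3 : ℝ) / 2) + m₁ / (4 * r₁ ^ 3) ∧
        ω ^ 2 = 2 * m₁ / (r₁ ^ 2 + r₂ ^ 2) ^ ((3 : ℝ) / 2) + m₂ / (4 * r₂ ^ 3)) := by
  subst h13; subst h24
  constructor
  · rintro ⟨hsep, hEq⟩
    constructor
    · obtain ⟨-, a, ha, hfa⟩ := hEq 0 0 (Set.mem_univ 0)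
      have haa := ha.unique (rm_hasDeriv2 r₁ r₂ ω α₀ 0 0)
      rw [haa, force0 r₁ r₂ ω α₀ m₁ m₂ hr₁ hr₂ 0, smul_smul] at hfa
      simp only [Matrix.cons_val_zero] at hfa
      have hnQ : ‖rhomboidalMotion r₁ r₂ ω α₀ 0 0‖ = r₁ := by
        rw [rm0, norm_pt, show (r₁ * Real.cos (ω*0+α₀))^2 + (r₁ * Real.sin (ω*0+α₀))^2 = r₁^2 by
          linear_combination r₁^2 * Real.sin_sq_add_cos_sq (ω*0+α₀)]
        exact Real.sqrt_sq hr₁.le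
      have hQ : rhomboidalMotion r₁ r₂ ω α₀ 0 0 ≠ 0 := by
        intro h; rw [h, norm_zero] at hnQ; exact hr₁.ne' hnQ.symm
      have h0 : (m₁ * -(ω^2) - -(m₁ * (2*m₂/(r₁^2+r₂^2)^((3:ℝ)/2) + m₁/(4*r₁^3))))
          • rhomboidalMotion r₁ r₂ ω α₀ 0 0 = 0 := by
        rw [sub_smul, hfa, sub_self]
      have h1 := (smul_eq_zero.mp h0).resolve_right hQ
      have h2 : m₁ * ((2*m₂/(r₁^2+r₂^2)^((3:ℝ)/2) + m₁/(4*r₁^3)) - ω^2) = 0 := by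
        linear_combination h1
      have h3 := (mul_eq_zero.mp h2).resolve_left hm₁.ne'
      linarith
    · obtain ⟨-, a, ha, hfa⟩ := hEq 1 0 (Set.mem_univ 0)
      have haa := ha.unique (rm_hasDeriv2 r₁ r₂ ω α₀ 1 0)
      rw [haa, force1 r₁ r₂ ω α₀ m₁ m₂ hr₁ hr₂ 0, smul_smul] at hfa
      simp only [Matrix.cons_val_one, Matrix.head_cons, Matrix.cons_val_zero] at hfa
      have hnQ : ‖rhomboidalMotion r₁ r₂ ω α₀ 1 0‖ = r₂ := by
        rw [rm1, norm_pt, show (-(r₂ * Real.sin (ω*0+α₀)))^2 + (r₂ * Real.cos (ω*0+α₀))^2 = r₂^2 by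
          linear_combination r₂^2 * Real.sin_sq_add_cos_sq (ω*0+α₀)]
        exact Real.sqrt_sq hr₂.le
      have hQ : rhomboidalMotion r₁ r₂ ω α₀ 1 0 ≠ 0 := by
        intro h; rw [h, norm_zero] at hnQ; exact hr₂.ne' hnQ.symm
      have h0 : (m₂ * -(ω^2) - -(m₂ * (2*m₁/(r₁^2+r₂^2)^((3:ℝ)/2) + m₂/(4*r₂^3))))
          • rhomboidalMotion r₁ r₂ ω α₀ 1 0 = 0 := by
        rw [sub_smul, hfa, sub_self]
      have h1 := (smul_eq_zero.mp h0).resolve_right hQ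
      have h2 : m₂ * ((2*m₁/(r₁^2+r₂^2)^((3:ℝ)/2) + m₂/(4*r₂^3)) - ω^2) = 0 := by
        linear_combination h1
      have h3 := (mul_eq_zero.mp h2).resolve_left hm₂.ne'
      linarith
  · rintro ⟨h1, h2⟩
    refine ⟨fun t _ i j hij => rm_ne r₁ r₂ ω α₀ hr₁ hr₂ t i j hij, fun i t _ =>
      ⟨(rm_hasDeriv r₁ r₂ ω α₀ i t).differentiableAt,
        (-(ω^2)) • rhomboidalMotion r₁ r₂ ω α₀ i t, rm_hasDeriv2 r₁ r₂ ω α₀ i t, ?_⟩⟩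
    fin_cases i
    · show ![m₁,m₂,m₁,m₂] (0:Fin 4) • -ω^2 • rhomboidalMotion r₁ r₂ ω α₀ (0:Fin 4) t
          = ∑ j ∈ Finset.univ.erase (0:Fin 4),
            ((![m₁,m₂,m₁,m₂] (0:Fin 4) * ![m₁,m₂,m₁,m₂] j)
                / ‖rhomboidalMotion r₁ r₂ ω α₀ j t - rhomboidalMotion r₁ r₂ ω α₀ (0:Fin 4) t‖ ^ 3)
              • (rhomboidalMotion r₁ r₂ ω α₀ j t - rhomboidalMotion r₁ r₂ ω α₀ (0:Fin 4) t)
      rw [force0 r₁ r₂ ω α₀ m₁ m₂ hr₁ hr₂ t, smul_smul]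
      congr 1
      simp only [Matrix.cons_val_zero]
      rw [h1]; ring
    · show ![m₁,m₂,m₁,m₂] (1:Fin 4) • -ω^2 • rhomboidalMotion r₁ r₂ ω α₀ (1:Fin 4) t
          = ∑ j ∈ Finset.univ.erase (1:Fin 4),
            ((![m₁,m₂,m₁,m₂] (1:Fin 4) * ![m₁,m₂,m₁,m₂] j)
                / ‖rhomboidalMotion r₁ r₂ ω α₀ j t - rhomboidalMotion r₁ r₂ ω α₀ (1:Fin 4) t‖ ^ 3)
              • (rhomboidalMotion r₁ r₂ ω α₀ j t - rhomboidalMotion r₁ r₂ ω α₀ (1:Fin 4) t)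
      rw [force1 r₁ r₂ ω α₀ m₁ m₂ hr₁ hr₂ t, smul_smul]
      congr 1
      simp only [Matrix.cons_val_one, Matrix.head_cons, Matrix.cons_val_zero]
      rw [h2]; ring
    · show ![m₁,m₂,m₁,m₂] (2:Fin 4) • -ω^2 • rhomboidalMotion r₁ r₂ ω α₀ (2:Fin 4) t
          = ∑ j ∈ Finset.univ.erase (2:Fin 4),
            ((![m₁,m₂,m₁,m₂] (2:Fin 4) * ![m₁,m₂,m₁,m₂] j)
                / ‖rhomboidalMotion r₁ r₂ ω α₀ j t - rhomboidalMotion r₁ r₂ ω α₀ (2:Fin 4) t‖ ^ 3)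
              • (rhomboidalMotion r₁ r₂ ω α₀ j t - rhomboidalMotion r₁ r₂ ω α₀ (2:Fin 4) t)
      rw [force2 r₁ r₂ ω α₀ m₁ m₂ hr₁ hr₂ t, smul_smul]
      congr 1
      simp only [Matrix.cons_val_two, Matrix.tail_cons, Matrix.head_cons]
      rw [h1]; ring
    · show ![m₁,m₂,m₁,m₂] (3:Fin 4) • -ω^2 • rhomboidalMotion r₁ r₂ ω α₀ (3:Fin 4) t
          = ∑ j ∈ Finset.univ.erase (3:Fin 4),
            ((![m₁,m₂,m₁,m₂] (3:Fin 4) * ![m₁,m₂,m₁,m₂] j)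
                / ‖rhomboidalMotion r₁ r₂ ω α₀ j t - rhomboidalMotion r₁ r₂ ω α₀ (3:Fin 4) t‖ ^ 3)
              • (rhomboidalMotion r₁ r₂ ω α₀ j t - rhomboidalMotion r₁ r₂ ω α₀ (3:Fin 4) t)
      rw [force3 r₁ r₂ ω α₀ m₁ m₂ hr₁ hr₂ t, smul_smul]
      congr 1
      simp only [Matrix.cons_val_three, Matrix.tail_cons, Matrix.head_cons]
      rw [h2]; ring

end
end

section
/- For any ω > 0, m_1 > 0 and m_2 > 0, there exists exactly one pair (r_1, r_2) with r_1 > 0 and r_2 > 0 satisfying the rhomboidal central configuration equations ω² = 2m_2/(r_1² + r_2²)^{3/2} + m_1/(4r_1³) and ω² = 2m_1/(r_1² + r_2²)^{3/2} + m_2/(4r_2³). -/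
open Real Set

noncomputable def rhG (t : ℝ) : ℝ := Real.sqrt (1 + t ^ 2) ^ 3

lemma rhG_pos (t : ℝ) : 0 < rhG t := by
  unfold rhG
  have : (0:ℝ) < Real.sqrt (1 + t ^ 2) := Real.sqrt_pos.mpr (by positivity)
  positivity

lemma rhG_lt {a b : ℝ} (ha : 0 ≤ a) (h : a < b) : rhG a < rhG b := by
  unfold rhG
  have h1 : Real.sqrt (1 + a ^ 2) < Real.sqrt (1 + b ^ 2) :=
    Real.sqrt_lt_sqrt (by positivity) (by nlinarith)
  exact pow_lt_pow_left₀ h1 (Real.sqrt_nonneg _) (by norm_num)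

lemma rhG_inv {t : ℝ} (ht : 0 < t) : rhG t⁻¹ = rhG t / t ^ 3 := by
  unfold rhG
  have h1 : (1 + (t⁻¹) ^ 2) = (1 + t ^ 2) / t ^ 2 := by field_simp; ring
  rw [h1, Real.sqrt_div (by positivity) (t ^ 2),
    show Real.sqrt (t ^ 2) = t from by rw [Real.sqrt_sq ht.le], div_pow]

lemma rpow_three_half {x : ℝ} (hx : 0 ≤ x) :
    x ^ ((3:ℝ)/2) = Real.sqrt x ^ 3 := by
  rw [Real.sqrt_eq_rpow, ← Real.rpow_natCast (x ^ ((1:ℝ)/2)) 3, ← Real.rpow_mul hx]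
  norm_num

noncomputable def rhPhi (m₁ m₂ t : ℝ) : ℝ :=
  2 * m₂ - 2 * m₁ + m₁ / 4 * rhG t - m₂ / 4 * rhG t⁻¹

lemma rhPhi_neg_inv (m₁ m₂ t : ℝ) : rhPhi m₁ m₂ t = - rhPhi m₂ m₁ t⁻¹ := by
  unfold rhPhi; rw [inv_inv]; ring

lemma rhPhi_pos {m₁ m₂ : ℝ} (hm₁ : 0 < m₁) (hm₂ : 0 < m₂) :
    0 < rhPhi m₁ m₂ (2 + m₂ / m₁) := by
  set b : ℝ := 2 + m₂ / m₁ with hbdef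
  clear_value b
  have hb2 : (2:ℝ) ≤ b := by
    have : 0 ≤ m₂ / m₁ := by positivity
    linarith
  have hb0 : (0:ℝ) < b := by linarith
  have hGb : b ^ 3 ≤ rhG b := by
    unfold rhG
    have h1 : b ≤ Real.sqrt (1 + b ^ 2) := by
      calc b = Real.sqrt (b ^ 2) := (Real.sqrt_sq hb0.le).symm
        _ ≤ Real.sqrt (1 + b ^ 2) := Real.sqrt_le_sqrt (by nlinarith)
    exact pow_le_pow_left₀ hb0.le h1 3
  have hGinv : rhG b⁻¹ ≤ 4 := by
    unfold rhG
    have hb1 : b⁻¹ ≤ 1 := by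
      rw [inv_le_one_iff₀]; right; linarith
    have h2 : Real.sqrt (1 + (b⁻¹) ^ 2) ≤ 3 / 2 := by
      rw [show (3/2:ℝ) = Real.sqrt ((3/2) ^ 2) from (Real.sqrt_sq (by norm_num)).symm]
      apply Real.sqrt_le_sqrt
      have : (0:ℝ) ≤ b⁻¹ := by positivity
      nlinarith
    calc Real.sqrt (1 + (b⁻¹) ^ 2) ^ 3 ≤ (3/2) ^ 3 :=
          pow_le_pow_left₀ (Real.sqrt_nonneg _) h2 3
      _ ≤ 4 := by norm_num
  have hcube : 4 * b ≤ b ^ 3 := by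
    have h := mul_nonneg hb0.le (mul_nonneg (by linarith : (0:ℝ) ≤ b - 2) (by linarith : (0:ℝ) ≤ b + 2))
    nlinarith
  have hbval : 8 + 4 * (m₂ / m₁) ≤ b ^ 3 := by
    calc (8:ℝ) + 4 * (m₂ / m₁) = 4 * b := by rw [hbdef]; ring
      _ ≤ b ^ 3 := hcube
  have hm : m₁ * (m₂ / m₁) = m₂ := by field_simp
  unfold rhPhi
  nlinarith [mul_le_mul_of_nonneg_left hbval (le_of_lt hm₁),
    mul_le_mul_of_nonneg_left hGinv (by positivity : (0:ℝ) ≤ m₂/4),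
    mul_le_mul_of_nonneg_left hGb (by positivity : (0:ℝ) ≤ m₁/4)]

lemma rhPhi_strictMonoOn {m₁ m₂ : ℝ} (hm₁ : 0 < m₁) (hm₂ : 0 < m₂) :
    StrictMonoOn (rhPhi m₁ m₂) (Ioi (0:ℝ)) := by
  intro a ha b hb hab
  simp only [mem_Ioi] at ha hb
  have h1 : rhG a < rhG b := rhG_lt ha.le hab
  have h2 : rhG b⁻¹ < rhG a⁻¹ :=
    rhG_lt (by positivity) (inv_strictAnti₀ ha hab)
  unfold rhPhi
  nlinarith

lemma rhPhi_continuousOn (m₁ m₂ : ℝ) :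
    ContinuousOn (rhPhi m₁ m₂) (Ioi (0:ℝ)) := by
  have hGc : Continuous rhG := by
    unfold rhG; continuity
  have hinv : ContinuousOn (fun t : ℝ => t⁻¹) (Ioi (0:ℝ)) :=
    continuousOn_inv₀.mono (fun x hx => ne_of_gt hx)
  unfold rhPhi
  exact ((continuousOn_const.add (continuousOn_const.mul hGc.continuousOn)).sub
    (continuousOn_const.mul (hGc.comp_continuousOn hinv)))

/-- For any `ω, m₁, m₂ > 0` there is exactly one pair `(r₁, r₂)` of positive radii
satisfying the rhomboidal central configuration equations. -/
theorem rhomboidal_radii_existence_uniqueness (ω m₁ m₂ : ℝ)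
    (hω : 0 < ω) (hm₁ : 0 < m₁) (hm₂ : 0 < m₂) :
    ∃! r : ℝ × ℝ, 0 < r.1 ∧ 0 < r.2 ∧
      ω ^ 2 = 2 * m₂ / (r.1 ^ 2 + r.2 ^ 2) ^ ((3 : ℝ) / 2) + m₁ / (4 * r.1 ^ 3) ∧
      ω ^ 2 = 2 * m₁ / (r.1 ^ 2 + r.2 ^ 2) ^ ((3 : ℝ) / 2) + m₂ / (4 * r.2 ^ 3) := by
  -- Step 1: find the unique root `t` of `rhPhi m₁ m₂` on `(0, ∞)`
  obtain ⟨a, hadef⟩ : ∃ a : ℝ, a = (2 + m₁ / m₂)⁻¹ := ⟨_, rfl⟩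
  obtain ⟨b, hbdef⟩ : ∃ b : ℝ, b = 2 + m₂ / m₁ := ⟨_, rfl⟩
  have hd2 : (2:ℝ) ≤ 2 + m₁ / m₂ := by
    have : 0 ≤ m₁ / m₂ := by positivity
    linarith
  have ha0 : 0 < a := by rw [hadef]; positivity
  have ha1 : a ≤ 1 := by
    rw [hadef]
    calc (2 + m₁ / m₂)⁻¹ ≤ (1:ℝ)⁻¹ := by
          apply inv_anti₀ (by norm_num) (by linarith)
      _ = 1 := by norm_num
  have hb2 : (2:ℝ) ≤ b := by
    rw [hbdef]
    have : 0 ≤ m₂ / m₁ := by positivity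
    linarith
  have hab : a ≤ b := by linarith
  have hΦa : rhPhi m₁ m₂ a < 0 := by
    have hpos : 0 < rhPhi m₂ m₁ (2 + m₁ / m₂) := rhPhi_pos hm₂ hm₁
    rw [rhPhi_neg_inv, hadef, inv_inv]
    linarith
  have hΦb : 0 < rhPhi m₁ m₂ b := by rw [hbdef]; exact rhPhi_pos hm₁ hm₂
  have hsub : Icc a b ⊆ Ioi (0:ℝ) := fun x hx => lt_of_lt_of_le ha0 hx.1
  obtain ⟨t, htmem, htΦ⟩ :=
    intermediate_value_Icc hab ((rhPhi_continuousOn m₁ m₂).mono hsub)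
      (⟨hΦa.le, hΦb.le⟩ : (0:ℝ) ∈ Icc (rhPhi m₁ m₂ a) (rhPhi m₁ m₂ b))
  have ht0 : 0 < t := lt_of_lt_of_le ha0 htmem.1
  -- Step 2: construct the solution
  obtain ⟨s, hsdef⟩ : ∃ s : ℝ, s = Real.sqrt (1 + t ^ 2) := ⟨_, rfl⟩
  have hs0 : 0 < s := by rw [hsdef]; exact Real.sqrt_pos.mpr (by positivity)
  have hs2 : s ^ 2 = 1 + t ^ 2 := by rw [hsdef]; exact Real.sq_sqrt (by positivity)
  obtain ⟨K, hKdef⟩ : ∃ K : ℝ, K = 2 * m₂ + m₁ / 4 * s ^ 3 := ⟨_, rfl⟩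
  have hK0 : 0 < K := by rw [hKdef]; nlinarith [pow_pos hs0 3]
  obtain ⟨ρ, hρdef⟩ : ∃ ρ : ℝ, ρ = (K / ω ^ 2) ^ ((1:ℝ)/3) := ⟨_, rfl⟩
  have hρ0 : 0 < ρ := by rw [hρdef]; exact Real.rpow_pos_of_pos (by positivity) _
  have hρ3 : ρ ^ 3 = K / ω ^ 2 := by
    rw [hρdef, ← Real.rpow_natCast ((K / ω ^ 2) ^ ((1:ℝ)/3)) 3,
      ← Real.rpow_mul (by positivity)]
    norm_num
  have hωρ : ω ^ 2 * ρ ^ 3 = K := by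
    rw [hρ3]
    field_simp
  -- polynomial form of the root equation
  have hΦt : (2 * m₂ - 2 * m₁) * t ^ 3 + m₁ / 4 * s ^ 3 * t ^ 3 - m₂ / 4 * s ^ 3 = 0 := by
    have h := htΦ
    unfold rhPhi at h
    rw [rhG_inv ht0] at h
    unfold rhG at h
    rw [← hsdef] at h
    field_simp [ht0.ne'] at h
    linear_combination h / 4
  obtain ⟨r₁, hr₁def⟩ : ∃ r₁ : ℝ, r₁ = ρ / s := ⟨_, rfl⟩
  obtain ⟨r₂, hr₂def⟩ : ∃ r₂ : ℝ, r₂ = t * r₁ := ⟨_, rfl⟩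
  have hr₁0 : 0 < r₁ := by rw [hr₁def]; exact div_pos hρ0 hs0
  have hr₂0 : 0 < r₂ := by rw [hr₂def]; exact mul_pos ht0 hr₁0
  have hsum : r₁ ^ 2 + r₂ ^ 2 = ρ ^ 2 := by
    rw [hr₂def, hr₁def]
    field_simp
    linear_combination (-1) * hs2
  have hpow : (r₁ ^ 2 + r₂ ^ 2) ^ ((3:ℝ)/2) = ρ ^ 3 := by
    rw [hsum, rpow_three_half (sq_nonneg ρ), Real.sqrt_sq hρ0.le]
  refine ⟨(r₁, r₂), ⟨hr₁0, hr₂0, ?_, ?_⟩, ?_⟩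
  · show ω ^ 2 = 2 * m₂ / (r₁ ^ 2 + r₂ ^ 2) ^ ((3:ℝ)/2) + m₁ / (4 * r₁ ^ 3)
    rw [hpow, hr₁def]
    rw [hKdef] at hωρ
    field_simp
    linear_combination 4 * hωρ
  · show ω ^ 2 = 2 * m₁ / (r₁ ^ 2 + r₂ ^ 2) ^ ((3:ℝ)/2) + m₂ / (4 * r₂ ^ 3)
    rw [hpow, hr₂def, hr₁def]
    rw [hKdef] at hωρ
    field_simp
    linear_combination (4 * t ^ 3) * hωρ + 4 * hΦt
  · rintro ⟨p, q⟩ ⟨hp, hq, he1, he2⟩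
    dsimp only at hp hq he1 he2
    obtain ⟨u, hudef⟩ : ∃ u : ℝ, u = q / p := ⟨_, rfl⟩
    have hu0 : 0 < u := by rw [hudef]; exact div_pos hq hp
    have hq' : q = u * p := by rw [hudef]; field_simp
    obtain ⟨su, hsudef⟩ : ∃ su : ℝ, su = Real.sqrt (1 + u ^ 2) := ⟨_, rfl⟩
    have hsu0 : 0 < su := by rw [hsudef]; exact Real.sqrt_pos.mpr (by positivity)
    have hsu2 : su ^ 2 = 1 + u ^ 2 := by rw [hsudef]; exact Real.sq_sqrt (by positivity)
    have hP : (p ^ 2 + q ^ 2) ^ ((3:ℝ)/2) = (p * su) ^ 3 := by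
      rw [show p ^ 2 + q ^ 2 = (p * su) ^ 2 by rw [hq']; linear_combination (-(p ^ 2)) * hsu2,
        rpow_three_half (sq_nonneg _), Real.sqrt_sq (by positivity)]
    rw [hP] at he1 he2
    have key1 : ω ^ 2 * (p * su) ^ 3 = 2 * m₂ + m₁ / 4 * su ^ 3 := by
      rw [he1]
      field_simp
    have key2 : ω ^ 2 * (p * su) ^ 3 * u ^ 3 = 2 * m₁ * u ^ 3 + m₂ / 4 * su ^ 3 := by
      rw [he2, hq']
      field_simp
    have hΦu : rhPhi m₁ m₂ u = 0 := by
      unfold rhPhi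
      rw [rhG_inv hu0]
      unfold rhG
      rw [← hsudef]
      have hpoly : (2 * m₂ - 2 * m₁) * u ^ 3 + m₁ / 4 * su ^ 3 * u ^ 3 - m₂ / 4 * su ^ 3 = 0 := by
        linear_combination key2 - u ^ 3 * key1
      field_simp [hu0.ne']
      linear_combination 4 * hpoly
    have hut : u = t :=
      (rhPhi_strictMonoOn hm₁ hm₂).injOn (mem_Ioi.mpr hu0) (mem_Ioi.mpr ht0)
        (hΦu.trans htΦ.symm)
    have hsus : su = s := by rw [hsudef, hsdef, hut]
    have hcube : (p * su) ^ 3 = ρ ^ 3 := by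
      have h : ω ^ 2 * (p * su) ^ 3 = ω ^ 2 * ρ ^ 3 := by
        rw [hωρ, key1, hKdef, hsus]
      exact mul_left_cancel₀ (by positivity) h
    have hpsu : p * su = ρ :=
      (pow_left_strictMonoOn₀ (n := 3) (by norm_num)).injOn
        (le_of_lt (by positivity)) (le_of_lt hρ0) hcube
    have hpr : p = r₁ := by
      rw [hr₁def, ← hpsu, hsus]
      field_simp
    have hqr : q = r₂ := by
      rw [hr₂def, hq', hut, hpr]
    exact Prod.ext hpr hqr
end
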